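/- (Thas) Let O be a pseudo-oval of PG(3n−1,q), i.e., a generalised (q^n+1)-arc. Then for each element π ∈ O there is exactly one subspace τ of F_q^{3n} of vector-space dimension 2n such that π ⊆ τ and τ ∩ π′ = {0} for every π′ ∈ O with π′ ≠ π (the tangent space of O at π). -/

import Mathlib

open Module Submodule Finset

/-- The sum of all elements of a finite field of more than 2 elements is zero. -/
lemma sum_univ_field_eq_zero {F : Type} [Field F] [Fintype F]
    (h : 2 < Fintype.card F) : ∑ c : F, c = 0 := by
  have := FiniteField.sum_pow_lt_card_sub_one (K := F) 1 (by omega)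
  simpa using this

/-- The sum of all vectors of a finite vector space with more than 2 elements is zero. -/
lemma sum_univ_module_eq_zero {F : Type} [Field F] [Fintype F] {M : Type}
    [AddCommGroup M] [Module F M] [Fintype M] [FiniteDimensional F M]
    (h : 2 < Fintype.card M) : ∑ y : M, y = 0 := by
  classical
  set d := finrank F M with hd
  have e : M ≃ₗ[F] (Fin d → F) := (Module.finBasis F M).equivFun
  have hcM : Fintype.card M = Fintype.card F ^ d := by
    rw [card_eq_pow_finrank (K := F) (V := M)]
  have hsum : ∑ y : M, y = e.symm (∑ v : Fin d → F, v) := by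
    rw [map_sum]
    exact Fintype.sum_equiv e.toEquiv (fun y : M => y) (fun v => e.symm v) (fun y => by simp)
  rw [hsum]
  suffices hz : (∑ v : Fin d → F, v) = 0 by rw [hz, map_zero]
  have hd1 : 1 ≤ d := by
    by_contra hc
    push_neg at hc
    have h0 : d = 0 := by omega
    rw [h0, pow_zero] at hcM
    omega
  funext i
  have hsplit : (∑ v : Fin d → F, v) i = ∑ v : Fin d → F, v i := by
    rw [Finset.sum_apply]
  rw [hsplit, Pi.zero_apply]
  have := Fintype.sum_equiv (Equiv.piSplitAt i (fun _ : Fin d => F))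
    (fun v => v i) (fun p => p.1) (fun v => rfl)
  rw [this, Fintype.sum_prod_type]
  simp only [Finset.sum_const, Finset.card_univ, smul_eq_mul]
  rw [← Finset.smul_sum]
  set k := Fintype.card ({ j // j ≠ i } → F) with hk
  have hkval : k = Fintype.card F ^ (d - 1) := by
    rw [hk, Fintype.card_fun]
    congr 1
    rw [Fintype.card_subtype_compl]
    simp
  rcases lt_or_ge 2 (Fintype.card F) with hF | hF
  · rw [sum_univ_field_eq_zero hF, smul_zero]
  · -- card F = 2, d ≥ 2, k even
    have hF2 : Fintype.card F = 2 := le_antisymm hF Fintype.one_lt_card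
    have hd2 : 2 ≤ d := by
      rcases Nat.lt_or_ge d 2 with h' | h'
      · exfalso
        have hle : Fintype.card F ^ d ≤ 2 ^ 1 := by
          rw [hF2]
          exact Nat.pow_le_pow_right (by norm_num) (by omega)
        simp at hle
        omega
      · exact h'
    have hkeven : ∃ m, k = 2 * m := by
      refine ⟨Fintype.card F ^ (d - 2), ?_⟩
      rw [hkval, hF2]
      rw [show d - 1 = 1 + (d-2) by omega, pow_add, pow_one]
    obtain ⟨m, hm⟩ := hkeven
    rw [hm, mul_comm 2 m, mul_nsmul, smul_comm]
    have h2 : (2 : ℕ) • (∑ c : F, c) = 0 := by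
      rw [← hF2]
      exact card_nsmul_eq_zero
    rw [h2, smul_zero]

/-- Core lemma: a partial spread of `qⁿ` pairwise-disjoint `n`-dimensional subspaces of a
`2n`-dimensional space over a field with `q` elements extends uniquely to a spread:
there is exactly one further `n`-dimensional subspace meeting all of them trivially. -/
theorem spread_core {F : Type} [Field F] [Fintype F]
    {V : Type} [AddCommGroup V] [Module F V] [FiniteDimensional F V]
    {n : ℕ} (hn : 1 ≤ n) (hV : finrank F V = 2 * n)
    (S : Finset (Submodule F V)) (hScard : S.card = Fintype.card F ^ n)
    (hSdim : ∀ s ∈ S, finrank F s = n)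
    (hSdisj : ∀ s ∈ S, ∀ t ∈ S, s ≠ t → s ⊓ t = ⊥) :
    ∃! T : Submodule F V, finrank F T = n ∧ ∀ s ∈ S, T ⊓ s = ⊥ := by
  classical
  have hq2 : 2 ≤ Fintype.card F := Fintype.one_lt_card
  have hqn2 : 2 ≤ Fintype.card F ^ n :=
    le_trans hq2 (Nat.le_self_pow (by omega) _)
  obtain ⟨s₁, hs₁, s₂, hs₂, h12⟩ := Finset.one_lt_card.mp (by omega : 1 < S.card)
  have compl : ∀ s ∈ S, ∀ t ∈ S, s ≠ t → IsCompl s t := by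
    intro s hs t ht hne
    have hinf := hSdisj s hs t ht hne
    have h1 := Submodule.finrank_sup_add_finrank_inf_eq s t
    rw [hinf, hSdim s hs, hSdim t ht] at h1
    have hb : finrank F (⊥ : Submodule F V) = 0 := finrank_bot F V
    rw [hb] at h1
    have hsup : s ⊔ t = ⊤ := by
      apply Submodule.eq_top_of_finrank_eq
      rw [hV]; omega
    exact ⟨disjoint_iff.mpr hinf, codisjoint_iff.mpr hsup⟩
  have h12c : IsCompl s₁ s₂ := compl _ hs₁ _ hs₂ h12
  have hdisj12 : s₁ ⊓ s₂ = ⊥ := hSdisj _ hs₁ _ hs₂ h12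
  haveI : Finite ↥s₂ := Module.finite_of_finite F
  haveI : Fintype ↥s₂ := Fintype.ofFinite _
  have hcard2 : Fintype.card ↥s₂ = Fintype.card F ^ n := by
    rw [card_eq_pow_finrank (K := F) (V := ↥s₂), hSdim s₂ hs₂]
  -- projections onto s₁ and s₂
  set P₁ := s₁.projectionOnto s₂ h12c with hP₁def
  set P₂ := s₂.projectionOnto s₁ h12c.symm with hP₂def
  have hP : ∀ v : V, (P₁ v : V) + (P₂ v : V) = v := fun v =>
    Submodule.projection_add_projection_eq_self h12c v
  have hP₁eval : ∀ (x : ↥s₁) (y : ↥s₂), P₁ ((x : V) + (y : V)) = x := by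
    intro x y
    rw [map_add, Submodule.projectionOnto_apply_left h12c x,
      Submodule.projectionOnto_apply_of_mem_right h12c y.2, add_zero]
  have hP₂eval : ∀ (x : ↥s₁) (y : ↥s₂), P₂ ((x : V) + (y : V)) = y := by
    intro x y
    rw [map_add, Submodule.projectionOnto_apply_left h12c.symm y,
      Submodule.projectionOnto_apply_of_mem_right h12c.symm x.2, zero_add]
  -- the complement of {s₁, s₂} in S
  set J : Finset (Submodule F V) := (S.erase s₁).erase s₂ with hJdef
  have hmemJ : ∀ j, j ∈ J ↔ (j ∈ S ∧ j ≠ s₁ ∧ j ≠ s₂) := by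
    intro j
    simp only [hJdef, Finset.mem_erase]
    tauto
  have hJcard : J.card = Fintype.card F ^ n - 2 := by
    have hs₂' : s₂ ∈ S.erase s₁ := Finset.mem_erase.mpr ⟨Ne.symm h12, hs₂⟩
    rw [hJdef, Finset.card_erase_of_mem hs₂', Finset.card_erase_of_mem hs₁, hScard]
    omega
  -- each spread element other than s₁, s₂ is the graph of a map s₁ → s₂
  have hfex : ∀ j : {j // j ∈ J}, ∃ fj : ↥s₁ →ₗ[F] ↥s₂,
      (∀ x : ↥s₁, (x : V) + (fj x : V) ∈ j.1) ∧
      (∀ v : V, v ∈ j.1 → P₂ v = fj (P₁ v)) := by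
    rintro ⟨j, hj⟩
    obtain ⟨hjS, hj1, hj2⟩ := (hmemJ j).mp hj
    have hc : IsCompl s₂ j := compl _ hs₂ _ hjS (Ne.symm hj2)
    set pj := s₂.projectionOnto j hc with hpjdef
    refine ⟨(-pj).comp s₁.subtype, ?_, ?_⟩
    · intro x
      have hsum := Submodule.projection_add_projection_eq_self hc (x : V)
      have hkey : ((j.projectionOnto s₂ hc.symm (x : V) : ↥j) : V)
          = (x : V) - ((pj (x : V) : ↥s₂) : V) := eq_sub_of_add_eq' hsum
      have hval : (x : V) + ((((-pj).comp s₁.subtype) x : ↥s₂) : V)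
          = ((j.projectionOnto s₂ hc.symm (x : V) : ↥j) : V) := by
        simp only [LinearMap.comp_apply, LinearMap.neg_apply, Submodule.coe_subtype]
        rw [hkey]
        push_cast
        abel
      rw [hval]
      exact Submodule.coe_mem _
    · intro v hv
      have h0 : pj v = 0 := Submodule.projectionOnto_apply_of_mem_right hc hv
      have h1 := congrArg pj (hP v)
      rw [map_add, Submodule.projectionOnto_apply_left hc (P₂ v), h0] at h1
      have h2 : P₂ v = -(pj ((P₁ v : V))) := eq_neg_of_add_eq_zero_right h1
      simpa using h2
  choose f hf1 hf2 using hfex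
  -- values of the fⱼ at a nonzero x are nonzero and pairwise distinct
  have hfne0 : ∀ (j : {j // j ∈ J}) (x : ↥s₁), x ≠ 0 → f j x ≠ 0 := by
    intro j x hx h0
    have hmem := hf1 j x
    rw [h0] at hmem
    simp only [Submodule.coe_zero, add_zero] at hmem
    obtain ⟨hjS, hj1, _⟩ := (hmemJ j.1).mp j.2
    have hx2 : (x : V) ∈ s₁ ⊓ j.1 := ⟨x.2, hmem⟩
    rw [hSdisj _ hs₁ _ hjS (Ne.symm hj1)] at hx2
    exact hx (Subtype.ext (by simpa using hx2))
  have hfinj : ∀ (x : ↥s₁), x ≠ 0 → ∀ j k : {j // j ∈ J}, j ≠ k → f j x ≠ f k x := by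
    intro x hx j k hjk heq
    have hj := hf1 j x
    have hk := hf1 k x
    rw [heq] at hj
    have hne : j.1 ≠ k.1 := fun h => hjk (Subtype.ext h)
    have hmem : (x : V) + (f k x : V) ∈ j.1 ⊓ k.1 := ⟨hj, hk⟩
    rw [hSdisj _ ((hmemJ j.1).mp j.2).1 _ ((hmemJ k.1).mp k.2).1 hne] at hmem
    have hxv : (x : V) = -((f k x : ↥s₂) : V) :=
      eq_neg_of_add_eq_zero_left ((Submodule.mem_bot F).mp hmem)
    have hx2 : (x : V) ∈ s₁ ⊓ s₂ := ⟨x.2, by rw [hxv]; exact neg_mem (f k x).2⟩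
    rw [hdisj12] at hx2
    exact hx (Subtype.ext (by simpa using hx2))
  -- the "excluded set" at x
  set A : ↥s₁ → Finset ↥s₂ :=
    fun x => insert 0 (Finset.univ.image fun j : {j // j ∈ J} => f j x) with hAdef
  have hAcard : ∀ x : ↥s₁, x ≠ 0 → (A x).card = Fintype.card F ^ n - 1 := by
    intro x hx
    rw [hAdef]
    rw [Finset.card_insert_of_notMem]
    · rw [Finset.card_image_of_injective _ (fun j k h => by
        by_contra hne
        exact hfinj x hx j k hne h)]
      rw [Finset.card_univ, Fintype.card_coe, hJcard]
      omega
    · intro h0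
      obtain ⟨j, _, hj⟩ := Finset.mem_image.mp h0
      exact hfne0 j x hx hj
  -- the linear map g whose graph is the missing spread element
  have hgex : ∃ g : ↥s₁ →ₗ[F] ↥s₂, ∀ x : ↥s₁, x ≠ 0 → g x ∉ A x := by
    rcases Finset.eq_empty_or_nonempty J with hJ | hJ
    · obtain ⟨e⟩ := FiniteDimensional.nonempty_linearEquiv_of_finrank_eq
        (by rw [hSdim _ hs₁, hSdim _ hs₂] : finrank F ↥s₁ = finrank F ↥s₂)
      refine ⟨e.toLinearMap, ?_⟩
      intro x hx hmem
      haveI : IsEmpty {j // j ∈ J} := by rw [hJ]; exact Finset.isEmpty_coe_sort.mpr rfl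
      rw [hAdef] at hmem
      haveI : IsEmpty {j // j ∈ J} := by rw [hJ]; exact Finset.isEmpty_coe_sort.mpr rfl
      rcases Finset.mem_insert.mp hmem with h0 | him
      · have h0' : e x = 0 := h0
        exact hx (e.map_eq_zero_iff.mp h0')
      · obtain ⟨j, _, _⟩ := Finset.mem_image.mp him
        exact (IsEmpty.false j)
    · have hqn3 : 3 ≤ Fintype.card F ^ n := by
        have := Finset.card_pos.mpr hJ
        omega
      refine ⟨-(∑ j : {j // j ∈ J}, f j), ?_⟩
      intro x hx hmem
      set m := (-(∑ j : {j // j ∈ J}, f j)) x with hmdef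
      have hmval : m = -∑ j : {j // j ∈ J}, f j x := by
        rw [hmdef]
        simp [LinearMap.sum_apply]
      have hsumA : ∑ y ∈ A x, y = -m := by
        rw [hAdef]
        rw [Finset.sum_insert (by
          intro h0
          obtain ⟨j, _, hj⟩ := Finset.mem_image.mp h0
          exact hfne0 j x hx hj)]
        rw [Finset.sum_image (fun j _ k _ h => by
          by_contra hne
          exact hfinj x hx j k hne h)]
        rw [hmval, neg_neg, zero_add]
      have hall : ∑ y : ↥s₂, y = 0 :=
        sum_univ_module_eq_zero (F := F) (by rw [hcard2]; omega)
      have hsplit : ∑ y ∈ (Finset.univ \ A x), y = m := by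
        have h1 := Finset.sum_sdiff (Finset.subset_univ (A x))
          (f := fun y : ↥s₂ => y)
        rw [hall, hsumA] at h1
        exact eq_of_sub_eq_zero (by rw [sub_eq_add_neg]; exact h1)
      have hcard1 : (Finset.univ \ A x).card = 1 := by
        rw [Finset.card_sdiff_of_subset (Finset.subset_univ _), Finset.card_univ, hcard2,
          hAcard x hx]
        omega
      obtain ⟨z, hz⟩ := Finset.card_eq_one.mp hcard1
      have hmz : m = z := by
        have := hsplit
        rw [hz, Finset.sum_singleton] at this
        exact this.symm
      have hznot : z ∉ A x := by
        have hzin : z ∈ Finset.univ \ A x := by rw [hz]; exact Finset.mem_singleton_self z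
        exact (Finset.mem_sdiff.mp hzin).2
      rw [hmz] at hmem
      exact hznot hmem
  obtain ⟨g, hg⟩ := hgex
  -- the complement of A x is exactly {g x}
  have hQ : ∀ x : ↥s₁, x ≠ 0 → ∀ y : ↥s₂, y ∉ A x → y = g x := by
    intro x hx y hy
    have hcard1 : (Finset.univ \ A x).card ≤ 1 := by
      rw [Finset.card_sdiff_of_subset (Finset.subset_univ _), Finset.card_univ, hcard2,
        hAcard x hx]
      omega
    have hyin : y ∈ Finset.univ \ A x :=
      Finset.mem_sdiff.mpr ⟨Finset.mem_univ _, hy⟩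
    have hgin : g x ∈ Finset.univ \ A x :=
      Finset.mem_sdiff.mpr ⟨Finset.mem_univ _, hg x hx⟩
    exact Finset.card_le_one.mp hcard1 _ hyin _ hgin
  -- the candidate tangent space: the graph of g
  set φ : ↥s₁ →ₗ[F] V := s₁.subtype + s₂.subtype.comp g with hφdef
  have hφval : ∀ x : ↥s₁, φ x = (x : V) + (g x : V) := fun x => rfl
  have hφinj : Function.Injective φ := by
    rw [← LinearMap.ker_eq_bot, eq_bot_iff]
    rintro x hx
    have hx0 : φ x = 0 := hx
    rw [hφval] at hx0
    have hxv : (x : V) = -((g x : ↥s₂) : V) := eq_neg_of_add_eq_zero_left hx0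
    have hx2 : (x : V) ∈ s₁ ⊓ s₂ := ⟨x.2, by rw [hxv]; exact neg_mem (g x).2⟩
    rw [hdisj12] at hx2
    exact Subtype.ext (by simpa using hx2)
  set T₀ : Submodule F V := LinearMap.range φ with hT₀def
  have hT₀dim : finrank F T₀ = n := by
    rw [hT₀def, LinearMap.finrank_range_of_inj hφinj, hSdim _ hs₁]
  -- every "hole" lies in T₀
  have hhole : ∀ v : V, (∀ s ∈ S, v ∉ s) → v ∈ T₀ := by
    intro v hv
    set x := P₁ v with hxdef
    set y := P₂ v with hydef
    have hxy : (x : V) + (y : V) = v := hP v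
    have hx0 : x ≠ 0 := by
      intro h
      apply hv s₂ hs₂
      rw [← hxy, h]
      simpa using y.2
    have hyA : y ∉ A x := by
      intro hyA
      rw [hAdef] at hyA
      rcases Finset.mem_insert.mp hyA with h0 | him
      · apply hv s₁ hs₁
        rw [← hxy, h0]
        simpa using x.2
      · obtain ⟨j, _, hj⟩ := Finset.mem_image.mp him
        apply hv j.1 ((hmemJ j.1).mp j.2).1
        rw [← hxy, ← hj]
        exact hf1 j x
    have hyg : y = g x := hQ x hx0 y hyA
    exact ⟨x, by rw [hφval, ← hyg]; exact hxy⟩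
  -- T₀ meets every spread element trivially
  have hT₀disj : ∀ s ∈ S, T₀ ⊓ s = ⊥ := by
    intro s hs
    rw [eq_bot_iff]
    rintro v ⟨hvT, hvs⟩
    obtain ⟨x, hx⟩ := hvT
    rw [hφval] at hx
    rw [Submodule.mem_bot]
    rcases eq_or_ne x 0 with h0 | h0
    · rw [← hx, h0]; simp
    · exfalso
      apply hg x h0
      rw [hAdef]
      by_cases hss : s = s₁
      · have hgmem : ((g x : ↥s₂) : V) ∈ s₁ ⊓ s₂ := by
          constructor
          · have : ((g x : ↥s₂) : V) = v - (x : V) := by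
              linear_combination (norm := module) hx
            rw [this]
            exact sub_mem (hss ▸ hvs) x.2
          · exact (g x).2
        rw [hdisj12] at hgmem
        have : g x = 0 := Subtype.ext (by simpa using hgmem)
        rw [this]
        exact Finset.mem_insert_self _ _
      · by_cases hss2 : s = s₂
        · exfalso
          have hxmem : (x : V) ∈ s₁ ⊓ s₂ := by
            constructor
            · exact x.2
            · have : (x : V) = v - ((g x : ↥s₂) : V) := by
                linear_combination (norm := module) hx
              rw [this]
              exact sub_mem (hss2 ▸ hvs) (g x).2
          rw [hdisj12] at hxmem
          exact h0 (Subtype.ext (by simpa using hxmem))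
        · have hjJ : s ∈ J := (hmemJ s).mpr ⟨hs, hss, hss2⟩
          have h2 := hf2 ⟨s, hjJ⟩ v hvs
          have e1 : P₁ v = x := by rw [← hx]; exact hP₁eval x (g x)
          have e2 : P₂ v = g x := by rw [← hx]; exact hP₂eval x (g x)
          rw [e1, e2] at h2
          exact Finset.mem_insert_of_mem
            (Finset.mem_image.mpr ⟨⟨s, hjJ⟩, Finset.mem_univ _, h2.symm⟩)
  refine ⟨T₀, ⟨hT₀dim, hT₀disj⟩, ?_⟩
  rintro T ⟨hTdim, hTdisj⟩
  have hle : T ≤ T₀ := by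
    intro t ht
    rcases eq_or_ne t 0 with rfl | ht0
    · exact zero_mem _
    · apply hhole
      intro s hs hts
      have hmem : t ∈ T ⊓ s := ⟨ht, hts⟩
      rw [hTdisj s hs] at hmem
      exact ht0 ((Submodule.mem_bot F).mp hmem)
  exact Submodule.eq_of_le_of_finrank_eq hle (by rw [hTdim, hT₀dim])

/-- A generalised `k`-arc in `PG(3n−1,q)`: a set of `k` subspaces of `F_q^{3n}`, each
of vector-space dimension `n`, such that any three distinct members span `F_q^{3n}`.
A generalised `(qⁿ+1)`-arc is called a pseudo-oval. -/
def IsGeneralisedArc (n : ℕ) (F : Type) [Field F]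
    (K : Finset (Submodule F (Fin (3 * n) → F))) : Prop :=
  (∀ W ∈ K, Module.finrank F W = n) ∧
    ∀ W₁ ∈ K, ∀ W₂ ∈ K, ∀ W₃ ∈ K, W₁ ≠ W₂ → W₁ ≠ W₃ → W₂ ≠ W₃ →
      W₁ ⊔ W₂ ⊔ W₃ = ⊤

set_option maxHeartbeats 1000000 in
set_option synthInstance.maxHeartbeats 400000 in
/-- Thas: if `O` is a pseudo-oval of `PG(3n−1,q)` (a generalised `(qⁿ+1)`-arc), then
every element `π` of `O` lies in exactly one `2n`-dimensional subspace `τ` of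
`F_q^{3n}` meeting every other element of `O` trivially (the tangent space at `π`). -/
theorem pseudo_oval_tangent_space (n q : ℕ) (hn : 1 ≤ n)
    (F : Type) [Field F] [Fintype F] (hq : Fintype.card F = q)
    (O : Finset (Submodule F (Fin (3 * n) → F)))
    (hO : IsGeneralisedArc n F O) (hcard : O.card = q ^ n + 1) :
    ∀ π ∈ O, ∃! τ : Submodule F (Fin (3 * n) → F),
      Module.finrank F τ = 2 * n ∧ π ≤ τ ∧
        ∀ π' ∈ O, π' ≠ π → τ ⊓ π' = ⊥ := by
  classical
  intro π hπ
  obtain ⟨hOdim, hOspan⟩ := hO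
  subst hq
  have hq2 : 2 ≤ Fintype.card F := Fintype.one_lt_card
  have hqn2 : 2 ≤ Fintype.card F ^ n := le_trans hq2 (Nat.le_self_pow (by omega) _)
  have hVdim : finrank F (Fin (3 * n) → F) = 3 * n := by
    simp [Module.finrank_pi]
  have hthird : ∀ A ∈ O, ∀ B ∈ O, A ≠ B → ∃ C ∈ O, C ≠ A ∧ C ≠ B := by
    intro A hA B hB hAB
    have hBA : B ∈ O.erase A := Finset.mem_erase.mpr ⟨Ne.symm hAB, hB⟩
    have hcard2' : ((O.erase A).erase B).card = Fintype.card F ^ n + 1 - 2 := by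
      rw [Finset.card_erase_of_mem hBA, Finset.card_erase_of_mem hA, hcard]
      omega
    have hne : ((O.erase A).erase B).Nonempty := by
      rw [← Finset.card_pos, hcard2']; omega
    obtain ⟨C, hC⟩ := hne
    obtain ⟨hCB, hC'⟩ := Finset.mem_erase.mp hC
    obtain ⟨hCA, hCO⟩ := Finset.mem_erase.mp hC'
    exact ⟨C, hCO, hCA, hCB⟩
  have hpair : ∀ A ∈ O, ∀ B ∈ O, A ≠ B →
      A ⊓ B = ⊥ ∧ finrank F ↥(A ⊔ B) = 2 * n := by
    intro A hA B hB hAB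
    obtain ⟨C, hC, hCA, hCB⟩ := hthird A hA B hB hAB
    have htop : A ⊔ B ⊔ C = ⊤ := hOspan A hA B hB C hC hAB hCA.symm hCB.symm
    have h1 := Submodule.finrank_sup_add_finrank_inf_eq (A ⊔ B) C
    rw [htop, finrank_top, hVdim, hOdim C hC] at h1
    have h2 := Submodule.finrank_sup_add_finrank_inf_eq A B
    rw [hOdim A hA, hOdim B hB] at h2
    have hup : finrank F ↥(A ⊔ B) = 2 * n := by omega
    refine ⟨?_, hup⟩
    have h0 : finrank F ↥(A ⊓ B) = 0 := by omega
    exact Submodule.finrank_eq_zero.mp h0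
  set O' := O.erase π with hO'def
  have hO'card : O'.card = Fintype.card F ^ n := by
    rw [hO'def, Finset.card_erase_of_mem hπ, hcard]
    omega
  have hmemO' : ∀ ρ, ρ ∈ O' ↔ ρ ∈ O ∧ ρ ≠ π := by
    intro ρ; rw [hO'def, Finset.mem_erase]; tauto
  have hQdim : finrank F ((Fin (3 * n) → F) ⧸ π) = 2 * n := by
    have := Submodule.finrank_quotient_add_finrank π
    rw [hVdim, hOdim π hπ] at this
    omega
  set S : Finset (Submodule F ((Fin (3 * n) → F) ⧸ π)) :=
    O'.image (fun ρ => Submodule.map π.mkQ ρ) with hSdef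
  have hmapdim : ∀ ρ ∈ O', finrank F ↥(Submodule.map π.mkQ ρ) = n := by
    intro ρ hρ
    obtain ⟨hρO, hρπ⟩ := (hmemO' ρ).mp hρ
    have hdisj : π ⊓ ρ = ⊥ := (hpair π hπ ρ hρO (Ne.symm hρπ)).1
    have h1 := LinearMap.finrank_range_add_finrank_ker (π.mkQ.domRestrict ρ)
    rw [LinearMap.range_domRestrict] at h1
    have hker : LinearMap.ker (π.mkQ.domRestrict ρ) = ⊥ := by
      rw [eq_bot_iff]
      intro x hk
      have hk' : π.mkQ (x : Fin (3 * n) → F) = 0 := hk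
      have hxπ : (x : Fin (3 * n) → F) ∈ π := by
        rwa [Submodule.mkQ_apply, Submodule.Quotient.mk_eq_zero] at hk'
      have hxx : (x : Fin (3 * n) → F) ∈ π ⊓ ρ := ⟨hxπ, x.2⟩
      rw [hdisj] at hxx
      rw [Submodule.mem_bot]
      exact Subtype.ext ((Submodule.mem_bot F).mp hxx)
    rw [hker, finrank_bot, hOdim ρ hρO] at h1
    omega
  have hmapinj : ∀ ρ₁ ∈ O', ∀ ρ₂ ∈ O',
      Submodule.map π.mkQ ρ₁ = Submodule.map π.mkQ ρ₂ → ρ₁ = ρ₂ := by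
    intro ρ₁ h1 ρ₂ h2 heq
    by_contra hne
    obtain ⟨h1O, h1π⟩ := (hmemO' ρ₁).mp h1
    obtain ⟨h2O, h2π⟩ := (hmemO' ρ₂).mp h2
    have htop : π ⊔ ρ₁ ⊔ ρ₂ = ⊤ :=
      hOspan π hπ ρ₁ h1O ρ₂ h2O (Ne.symm h1π) (Ne.symm h2π) hne
    have hle : ρ₂ ≤ π ⊔ ρ₁ := by
      intro v hv
      have hvm : π.mkQ v ∈ Submodule.map π.mkQ ρ₁ := by
        rw [heq]; exact Submodule.mem_map_of_mem hv
      obtain ⟨w, hw, hwv⟩ := hvm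
      have hmkeq : Submodule.Quotient.mk (p := π) v = Submodule.Quotient.mk w := by
        rw [← Submodule.mkQ_apply, ← Submodule.mkQ_apply, hwv]
      have hvw : v - w ∈ π := (Submodule.Quotient.eq π).mp hmkeq
      have hv' : v = (v - w) + w := by abel
      rw [hv']
      exact Submodule.add_mem _ (Submodule.mem_sup_left hvw) (Submodule.mem_sup_right hw)
    have heqtop : π ⊔ ρ₁ = ⊤ := by
      rw [← htop]
      exact (sup_eq_left.mpr hle).symm
    have hd := (hpair π hπ ρ₁ h1O (Ne.symm h1π)).2
    rw [heqtop, finrank_top, hVdim] at hd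
    omega
  have hScard : S.card = Fintype.card F ^ n := by
    rw [hSdef, Finset.card_image_of_injOn (fun ρ₁ h1 ρ₂ h2 h => hmapinj ρ₁ h1 ρ₂ h2 h)]
    exact hO'card
  have hSdim : ∀ s ∈ S, finrank F ↥s = n := by
    intro s hs
    obtain ⟨ρ, hρ, rfl⟩ := Finset.mem_image.mp hs
    exact hmapdim ρ hρ
  have hSdisj : ∀ s ∈ S, ∀ t ∈ S, s ≠ t → s ⊓ t = ⊥ := by
    intro s hs t ht hst
    obtain ⟨ρ₁, hρ₁, rfl⟩ := Finset.mem_image.mp hs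
    obtain ⟨ρ₂, hρ₂, rfl⟩ := Finset.mem_image.mp ht
    have hρne : ρ₁ ≠ ρ₂ := fun h => hst (by rw [h])
    obtain ⟨h1O, h1π⟩ := (hmemO' ρ₁).mp hρ₁
    obtain ⟨h2O, h2π⟩ := (hmemO' ρ₂).mp hρ₂
    rw [eq_bot_iff]
    rintro v ⟨hv1, hv2⟩
    obtain ⟨a, ha, hav⟩ := hv1
    obtain ⟨b, hb, hbv⟩ := hv2
    have hmkeq : Submodule.Quotient.mk (p := π) a = Submodule.Quotient.mk b := by
      rw [← Submodule.mkQ_apply, ← Submodule.mkQ_apply, hav, hbv]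
    have hab : a - b ∈ π := (Submodule.Quotient.eq π).mp hmkeq
    have hmem : a ∈ (π ⊔ ρ₂) ⊓ ρ₁ := by
      constructor
      · have ha' : a = (a - b) + b := by abel
        rw [ha']
        exact Submodule.add_mem _ (Submodule.mem_sup_left hab) (Submodule.mem_sup_right hb)
      · exact ha
    have hbot : (π ⊔ ρ₂) ⊓ ρ₁ = ⊥ := by
      have htop : π ⊔ ρ₁ ⊔ ρ₂ = ⊤ :=
        hOspan π hπ ρ₁ h1O ρ₂ h2O (Ne.symm h1π) (Ne.symm h2π) hρne
      have htop2 : (π ⊔ ρ₂) ⊔ ρ₁ = ⊤ := by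
        rw [← htop, sup_assoc, sup_assoc, sup_comm ρ₂ ρ₁]
      have h1 := Submodule.finrank_sup_add_finrank_inf_eq (π ⊔ ρ₂) ρ₁
      rw [htop2, finrank_top, hVdim, hOdim ρ₁ h1O,
        (hpair π hπ ρ₂ h2O (Ne.symm h2π)).2] at h1
      have h0 : finrank F ↥((π ⊔ ρ₂) ⊓ ρ₁) = 0 := by omega
      exact Submodule.finrank_eq_zero.mp h0
    rw [hbot] at hmem
    have ha0 : a = 0 := (Submodule.mem_bot F).mp hmem
    rw [Submodule.mem_bot, ← hav, ha0, map_zero]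
  obtain ⟨T, ⟨hTdim, hTdisj⟩, hTuniq⟩ := spread_core hn hQdim S hScard hSdim hSdisj
  have hrankU : ∀ U : Submodule F (Fin (3 * n) → F), π ≤ U →
      finrank F ↥U = finrank F ↥(Submodule.map π.mkQ U) + n := by
    intro U hU
    have h1 := LinearMap.finrank_range_add_finrank_ker (π.mkQ.domRestrict U)
    rw [LinearMap.range_domRestrict] at h1
    have hker : LinearMap.ker (π.mkQ.domRestrict U) = Submodule.comap U.subtype π := by
      ext x
      simp [LinearMap.mem_ker, Submodule.mkQ_apply, Submodule.Quotient.mk_eq_zero]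
    rw [hker] at h1
    have heq : finrank F ↥(Submodule.comap U.subtype π) = finrank F ↥π :=
      (Submodule.comapSubtypeEquivOfLe hU).finrank_eq
    rw [heq, hOdim π hπ] at h1
    omega
  set τ : Submodule F (Fin (3 * n) → F) := Submodule.comap π.mkQ T with hτdef
  have hπτ : π ≤ τ := by
    intro x hx
    show π.mkQ x ∈ T
    have h0 : π.mkQ x = 0 := by
      rw [Submodule.mkQ_apply]
      exact (Submodule.Quotient.mk_eq_zero π).mpr hx
    rw [h0]
    exact zero_mem T
  have hmapτ : Submodule.map π.mkQ τ = T := by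
    rw [hτdef, Submodule.map_comap_eq, Submodule.range_mkQ, top_inf_eq]
  have hτdim : finrank F ↥τ = 2 * n := by
    have := hrankU τ hπτ
    rw [hmapτ, hTdim] at this
    omega
  have hτdisj : ∀ ρ ∈ O, ρ ≠ π → τ ⊓ ρ = ⊥ := by
    intro ρ hρO hρπ
    have hρ' : ρ ∈ O' := (hmemO' ρ).mpr ⟨hρO, hρπ⟩
    rw [eq_bot_iff]
    rintro v ⟨hvτ, hvρ⟩
    have h1 : π.mkQ v ∈ T := hvτ
    have h2 : π.mkQ v ∈ Submodule.map π.mkQ ρ := Submodule.mem_map_of_mem hvρ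
    have h3 : π.mkQ v ∈ T ⊓ Submodule.map π.mkQ ρ := ⟨h1, h2⟩
    rw [hTdisj _ (Finset.mem_image_of_mem _ hρ')] at h3
    have h30 : π.mkQ v = 0 := (Submodule.mem_bot F).mp h3
    have hvπ : v ∈ π := by
      rwa [Submodule.mkQ_apply, Submodule.Quotient.mk_eq_zero] at h30
    have hvv : v ∈ π ⊓ ρ := ⟨hvπ, hvρ⟩
    rw [(hpair π hπ ρ hρO (Ne.symm hρπ)).1] at hvv
    exact hvv
  refine ⟨τ, ⟨hτdim, hπτ, fun ρ hρ hne => hτdisj ρ hρ hne⟩, ?_⟩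
  rintro τ' ⟨hd', hπ', hdisj'⟩
  have hmd' : finrank F ↥(Submodule.map π.mkQ τ') = n := by
    have := hrankU τ' hπ'
    rw [hd'] at this
    omega
  have hdisjmap : ∀ s ∈ S, Submodule.map π.mkQ τ' ⊓ s = ⊥ := by
    intro s hs
    obtain ⟨ρ, hρ, rfl⟩ := Finset.mem_image.mp hs
    obtain ⟨hρO, hρπ⟩ := (hmemO' ρ).mp hρ
    rw [eq_bot_iff]
    rintro v ⟨hv1, hv2⟩
    obtain ⟨a, ha, hav⟩ := hv1
    obtain ⟨b, hb, hbv⟩ := hv2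
    have hmkeq : Submodule.Quotient.mk (p := π) a = Submodule.Quotient.mk b := by
      rw [← Submodule.mkQ_apply, ← Submodule.mkQ_apply, hav, hbv]
    have hab : a - b ∈ π := (Submodule.Quotient.eq π).mp hmkeq
    have hbτ : b ∈ τ' := by
      have hb' : b = a - (a - b) := by abel
      rw [hb']
      exact Submodule.sub_mem _ ha (hπ' hab)
    have hbb : b ∈ τ' ⊓ ρ := ⟨hbτ, hb⟩
    rw [hdisj' ρ hρO hρπ] at hbb
    have hb0 : b = 0 := (Submodule.mem_bot F).mp hbb
    rw [Submodule.mem_bot, ← hbv, hb0, map_zero]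
  have hmapeq : Submodule.map π.mkQ τ' = T := hTuniq _ ⟨hmd', hdisjmap⟩
  have hcm : Submodule.comap π.mkQ (Submodule.map π.mkQ τ') = τ' := by
    rw [Submodule.comap_map_mkQ, sup_eq_right.mpr hπ']
  rw [← hcm, hmapeq]
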